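/- Let X be a nonempty Noetherian topological space and let k be a natural number. If there exists an infinite collection of pairwise distinct subsets of X, each of which is closed, irreducible, and of topological Krull dimension at least k (as a subspace), then the topological Krull dimension of X is at least k + 1. -/

import Mathlib

open TopologicalSpace Topology Order


/-- In a nonempty Noetherian topological space, an infinite collection of
pairwise distinct closed irreducible subsets, each of topological Krull
dimension at least `k`, forces the topological Krull dimension of the whole
space to be at least `k + 1`. -/
theorem stmt_4 {X : Type*} [TopologicalSpace X] [Nonempty X]
    [TopologicalSpace.NoetherianSpace X] (k : ℕ)
    (𝒞 : Set (Set X)) (hinf : 𝒞.Infinite)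
    (hclosed : ∀ C ∈ 𝒞, IsClosed C)
    (hirr : ∀ C ∈ 𝒞, IsIrreducible C)
    (hdim : ∀ C ∈ 𝒞, (k : WithBot ℕ∞) ≤ topologicalKrullDim C) :
    (k : WithBot ℕ∞) + 1 ≤ topologicalKrullDim X := by
  classical
  -- every element of 𝒞 is contained in some irreducible component
  have hcomp : ∀ C ∈ 𝒞, ∃ Z ∈ irreducibleComponents X, C ⊆ Z := by
    intro C hC
    obtain ⟨t, ht, hsub, hmax⟩ := exists_preirreducible C (hirr C hC).2
    exact ⟨t, ⟨⟨(hirr C hC).1.mono hsub, ht⟩, fun u hu htu => (hmax u hu.2 htu).le⟩, hsub⟩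
  choose f hf₁ hf₂ using hcomp
  haveI : Infinite 𝒞 := hinf.to_subtype
  haveI : Finite (irreducibleComponents X) :=
    TopologicalSpace.NoetherianSpace.finite_irreducibleComponents.to_subtype
  obtain ⟨Z, hZfib⟩ := Finite.exists_infinite_fiber
    (fun C : 𝒞 => (⟨f C C.2, hf₁ C C.2⟩ : irreducibleComponents X))
  haveI := hZfib
  obtain ⟨a, b, hab⟩ := exists_pair_ne
    ((fun C : 𝒞 => (⟨f C C.2, hf₁ C C.2⟩ : irreducibleComponents X)) ⁻¹' {Z})
  have hane : (a.1 : Set X) ≠ (b.1 : Set X) := fun h => hab (Subtype.ext (Subtype.ext h))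
  have hsub : ∀ c : ((fun C : 𝒞 => (⟨f C C.2, hf₁ C C.2⟩ : irreducibleComponents X)) ⁻¹' {Z}),
      (c.1 : Set X) ⊆ (Z : Set X) := by
    intro c
    have hc := c.2
    simp only [Set.mem_preimage, Set.mem_singleton_iff] at hc
    have : f c.1.1 c.1.2 = (Z : Set X) := congrArg Subtype.val hc
    rw [← this]
    exact hf₂ _ _
  obtain ⟨C, hC, hCZ, hCne⟩ : ∃ C ∈ 𝒞, C ⊆ (Z : Set X) ∧ C ≠ (Z : Set X) := by
    rcases eq_or_ne (a.1 : Set X) (Z : Set X) with h | h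
    · exact ⟨b.1, b.1.2, hsub b, fun hh => hane (h.trans hh.symm)⟩
    · exact ⟨a.1, a.1.2, hsub a, h⟩
  -- a chain of length ≥ k inside C
  haveI : IrreducibleSpace C := Subtype.irreducibleSpace (hirr C hC)
  haveI : Nonempty (IrreducibleCloseds C) :=
    ⟨⟨Set.univ, IrreducibleSpace.isIrreducible_univ C, isClosed_univ⟩⟩
  obtain ⟨p, hp⟩ : ∃ p : LTSeries (IrreducibleCloseds C), k ≤ p.length := by
    by_contra h
    push_neg at h
    obtain ⟨p₀⟩ := (inferInstance : Nonempty (IrreducibleCloseds C))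
    have hk0 : k ≠ 0 := fun hk => by simpa [hk] using h (RelSeries.singleton _ p₀)
    have hle : topologicalKrullDim C ≤ ((k - 1 : ℕ) : WithBot ℕ∞) := by
      refine iSup_le fun p => ?_
      exact_mod_cast Nat.le_sub_one_of_lt (h p)
    have h1 := le_trans (hdim C hC) hle
    have h2 : k ≤ k - 1 := by exact_mod_cast h1
    omega
  -- push the chain into X via the closed embedding C ↪ X
  have hemb : IsClosedEmbedding ((↑) : C → X) := (hclosed C hC).isClosedEmbedding_subtypeVal
  let q : LTSeries (IrreducibleCloseds X) :=
    p.map (IrreducibleCloseds.map _ hemb.continuous)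
      (IrreducibleCloseds.map_strictMono_of_isInducing hemb.isInducing)
  have hZirr : IsIrreducible (Z : Set X) := Z.2.1
  have hZcl : IsClosed (Z : Set X) := isClosed_of_mem_irreducibleComponents _ Z.2
  have h1 : (q.last : Set X) ⊆ C := by
    exact closure_minimal (by rintro x ⟨y, _, rfl⟩; exact y.2) (hclosed C hC)
  have hlt : q.last < ⟨(Z : Set X), hZirr, hZcl⟩ := by
    refine lt_of_le_of_ne (h1.trans hCZ) ?_
    intro hh
    have hZq : (Z : Set X) = (q.last : Set X) :=
      (congrArg (fun s : IrreducibleCloseds X => (s : Set X)) hh).symm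
    exact hCne (subset_antisymm hCZ (hZq ▸ h1))
  have hle := Order.LTSeries.length_le_krullDim (q.snoc _ hlt)
  rw [show topologicalKrullDim X = Order.krullDim (IrreducibleCloseds X) from rfl]
  refine le_trans ?_ hle
  have hlen : (q.snoc _ hlt).length = p.length + 1 := rfl
  rw [hlen]
  have : (k : ℕ∞) + 1 ≤ (p.length : ℕ∞) + 1 := by
    exact_mod_cast Nat.succ_le_succ hp
  exact_mod_cast this
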